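/- arXiv:2507.15039 — 2 statements merged into one kernel-verified Lean document; each statement's English description precedes it below -/
import Mathlib

section
/- Assume I is nonempty. Then there is no W-equivariant group homomorphism s : ℤ[Φ/±] → ℤΦ with π ∘ s = id; that is, the short exact sequence of W-representations 0 → P̄ → ℤΦ → ℤ[Φ/±] → 0 (where P̄ is the subgroup of ℤΦ generated by the T_α − T_{−α}) is not W-equivariantly split. -/
set_option linter.unusedSectionVars false

open Finset

noncomputable section

namespace ADE

variable {I : Type*} [Fintype I] [DecidableEq I]

/-- The coefficient matrix of the bilinear form attached to the graph `Γ`: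
`-2` on the diagonal, `1` for adjacent pairs of vertices, `0` otherwise. -/
def cartan (G : SimpleGraph I) [DecidableRel G.Adj] : Matrix I I ℤ :=
  Matrix.of fun i j => if i = j then -2 else if G.Adj i j then 1 else 0

/-- The symmetric bilinear form `B` on `ℤ^I` determined by
`B(e_i,e_i) = -2`, `B(e_i,e_j) = 1` for adjacent `i ≠ j`, and `0` otherwise. -/
def Bform (G : SimpleGraph I) [DecidableRel G.Adj] : LinearMap.BilinForm ℤ (I → ℤ) :=
  Matrix.toBilin' (cartan G)

/-- Negative definiteness of the induced real bilinear form on `ℝ^I`. -/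
def NegDef (G : SimpleGraph I) [DecidableRel G.Adj] : Prop :=
  ∀ v : I → ℝ, v ≠ 0 → (∑ i, ∑ j, v i * (cartan G i j : ℝ) * v j) < 0

/-- `α ∈ ℤ^I` is a root when `B(α,α) = -2`. -/
def IsRoot (G : SimpleGraph I) [DecidableRel G.Adj] (α : I → ℤ) : Prop :=
  Bform G α α = -2

variable (G : SimpleGraph I) [DecidableRel G.Adj]

lemma cartan_symm (i j : I) : cartan G i j = cartan G j i := by
  rcases eq_or_ne i j with h | h
  · subst h; rfl
  · by_cases hadj : G.Adj i j
    · simp [cartan, h, h.symm, hadj, hadj.symm]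
    · have h' : ¬ G.Adj j i := fun hc => hadj hc.symm
      simp [cartan, h, h.symm, hadj, h']

lemma Bform_apply (v w : I → ℤ) :
    Bform G v w = ∑ i, ∑ j, v i * cartan G i j * w j :=
  Matrix.toBilin'_apply _ _ _

lemma Bform_comm (v w : I → ℤ) : Bform G v w = Bform G w v := by
  rw [Bform_apply, Bform_apply, Finset.sum_comm]
  exact Finset.sum_congr rfl fun j _ => Finset.sum_congr rfl fun i _ => by
    rw [cartan_symm]; ring

lemma cartan_diag (i : I) : cartan G i i = -2 := by simp [cartan]

lemma Bform_single (i j : I) :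
    Bform G (Pi.single i 1) (Pi.single j 1) = cartan G i j := by
  rw [Bform_apply]
  simp [Pi.single_apply]

lemma Bform_single_self (i : I) :
    Bform G (Pi.single i 1) (Pi.single i 1) = -2 := by
  rw [Bform_single, cartan_diag]

/-- `IsRoot` is preserved by negation. -/
lemma isRoot_neg {α : I → ℤ} (h : IsRoot G α) : IsRoot G (-α) := by
  unfold IsRoot at h ⊢
  simpa [map_neg] using h

/-- The simple root `e_i` is a root. -/
lemma isRoot_single (i : I) : IsRoot G (Pi.single i 1) := Bform_single_self G i

/-- The reflection `s_i : v ↦ v + B(v,e_i)·e_i`. -/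
def reflect (i : I) (v : I → ℤ) : I → ℤ :=
  v + Bform G v (Pi.single i 1) • Pi.single i 1

/-- The reflection `s_i` as a linear map. -/
def reflectLM (i : I) : (I → ℤ) →ₗ[ℤ] (I → ℤ) :=
  LinearMap.id + (LinearMap.toSpanSingleton ℤ (I → ℤ) (Pi.single i 1)).comp
    ((Bform G).flip (Pi.single i 1))

lemma reflectLM_apply (i : I) (v : I → ℤ) : reflectLM G i v = reflect G i v := by
  simp [reflectLM, reflect, LinearMap.toSpanSingleton_apply]

/-- Reflections are isometries of `B`. -/
lemma Bform_reflect (i : I) (v w : I → ℤ) :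
    Bform G (reflect G i v) (reflect G i w) = Bform G v w := by
  have h1 : Bform G (Pi.single i 1) w = Bform G w (Pi.single i 1) := Bform_comm G _ _
  simp only [reflect, map_add, map_smul, LinearMap.add_apply, LinearMap.smul_apply,
    smul_eq_mul, Bform_single_self, h1]
  ring

lemma reflect_reflect (i : I) (v : I → ℤ) : reflect G i (reflect G i v) = v := by
  have h : Bform G (reflect G i v) (Pi.single i 1) = - Bform G v (Pi.single i 1) := by
    simp only [reflect, map_add, LinearMap.add_apply, map_smul, LinearMap.smul_apply,
      smul_eq_mul, Bform_single_self]
    ring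
  conv_lhs => rw [reflect, h]
  rw [reflect, neg_smul, add_neg_cancel_right]

/-- The reflection `s_i` as a linear automorphism of `ℤ^I`. -/
def reflectEquiv (i : I) : (I → ℤ) ≃ₗ[ℤ] (I → ℤ) where
  __ := reflectLM G i
  invFun := reflect G i
  left_inv := fun v => by
    show reflect G i (reflectLM G i v) = v
    rw [reflectLM_apply]; exact reflect_reflect G i v
  right_inv := fun v => by
    show reflectLM G i (reflect G i v) = v
    rw [reflectLM_apply]; exact reflect_reflect G i v

lemma reflectEquiv_apply (i : I) (v : I → ℤ) : reflectEquiv G i v = reflect G i v :=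
  reflectLM_apply G i v

/-- The Weyl group `W`: the subgroup of the group of `ℤ`-linear automorphisms
of `ℤ^I` generated by the reflections `s_i`. -/
def Weyl : Subgroup ((I → ℤ) ≃ₗ[ℤ] (I → ℤ)) :=
  Subgroup.closure (Set.range (reflectEquiv G))

lemma reflectEquiv_inv (i : I) : (reflectEquiv G i)⁻¹ = reflectEquiv G i := by
  apply LinearEquiv.toLinearMap_injective
  apply LinearMap.ext
  intro v
  have h1 : ((reflectEquiv G i)⁻¹ : (I → ℤ) ≃ₗ[ℤ] (I → ℤ)) v = (reflectEquiv G i).symm v := rfl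
  show ((reflectEquiv G i)⁻¹ : (I → ℤ) ≃ₗ[ℤ] (I → ℤ)) v = reflectEquiv G i v
  rw [h1, reflectEquiv_apply]
  rfl

lemma isRoot_reflect (i : I) {α : I → ℤ} (h : IsRoot G α) : IsRoot G (reflect G i α) := by
  unfold IsRoot at h ⊢
  rw [Bform_reflect]; exact h

/-- Every element of the Weyl group maps roots to roots. -/
lemma weyl_isRoot {w : (I → ℤ) ≃ₗ[ℤ] (I → ℤ)} (hw : w ∈ Weyl G) :
    ∀ α : I → ℤ, IsRoot G α → IsRoot G (w α) := by
  have main : (∀ α, IsRoot G α → IsRoot G (w α)) ∧ (∀ α, IsRoot G α → IsRoot G (w⁻¹ α)) := by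
    induction hw using Subgroup.closure_induction with
    | mem x hx =>
        obtain ⟨i, rfl⟩ := hx
        constructor
        · intro α hα; rw [reflectEquiv_apply]; exact isRoot_reflect G i hα
        · intro α hα; rw [reflectEquiv_inv, reflectEquiv_apply]; exact isRoot_reflect G i hα
    | one => exact ⟨fun α h => h, fun α h => by simpa using h⟩
    | mul x y hx hy ihx ihy =>
        refine ⟨fun α h => ?_, fun α h => ?_⟩
        · exact ihx.1 _ (ihy.1 _ h)
        · rw [mul_inv_rev]
          exact ihy.2 _ (ihx.2 _ h)
    | inv x hx ihx =>
        refine ⟨ihx.2, fun α h => ?_⟩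
        rw [inv_inv]
        exact ihx.1 α h
  exact main.1

/-- The type of roots. -/
def Root := {α : I → ℤ // IsRoot G α}

/-- The simple root `e_i` as an element of `Root`. -/
def simpleRoot (i : I) : Root G := ⟨Pi.single i 1, isRoot_single G i⟩

/-- Negation of a root. -/
def negRoot (α : Root G) : Root G := ⟨-α.1, isRoot_neg G α.2⟩

/-- The generator `s_i` as an element of the Weyl group. -/
def sGen (i : I) : ↥(Weyl G) := ⟨reflectEquiv G i, Subgroup.subset_closure ⟨i, rfl⟩⟩

/-- Action of a Weyl group element on roots. -/
def rootSmul (w : ↥(Weyl G)) (α : Root G) : Root G :=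
  ⟨(w : (I → ℤ) ≃ₗ[ℤ] (I → ℤ)) α.1, weyl_isRoot G w.2 α.1 α.2⟩

/-- The equivalence relation identifying a root `α` with `±α`. -/
def rootSetoid : Setoid (Root G) where
  r α β := α.1 = β.1 ∨ α.1 = -β.1
  iseqv := by
    refine ⟨fun α => Or.inl rfl, ?_, ?_⟩
    · rintro α β (h | h)
      · exact Or.inl h.symm
      · exact Or.inr (by rw [h, neg_neg])
    · rintro α β γ (h₁ | h₁) (h₂ | h₂)
      · exact Or.inl (h₁.trans h₂)
      · exact Or.inr (h₁.trans h₂)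
      · exact Or.inr (by rw [h₁, h₂])
      · exact Or.inl (by rw [h₁, h₂, neg_neg])

/-- `Φ/±`: the quotient of the set of roots by the involution `α ↦ -α`. -/
def RootMod := Quotient (rootSetoid G)

/-- The class of a root in `Φ/±`. -/
def rcls (α : Root G) : RootMod G := Quotient.mk (rootSetoid G) α

/-- The class `[e_i]` of a simple root in `Φ/±`. -/
def cls (i : I) : RootMod G := rcls G (simpleRoot G i)

/-- Action of a Weyl group element on `Φ/±`. -/
def rmodSmul (w : ↥(Weyl G)) : RootMod G → RootMod G :=
  Quotient.map (rootSmul G w) (by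
    rintro α β (h | h)
    · exact Or.inl (by simp [rootSmul, h])
    · exact Or.inr (by simp [rootSmul, h, map_neg]))

/-- The action of `w ∈ W` on `ℤΦ` (the free abelian group on the roots). -/
def wZPhi (w : ↥(Weyl G)) : (Root G →₀ ℤ) →+ (Root G →₀ ℤ) :=
  Finsupp.mapDomain.addMonoidHom (rootSmul G w)

/-- The action of `w ∈ W` on `ℤ[Φ/±]`. -/
def wZQ (w : ↥(Weyl G)) : (RootMod G →₀ ℤ) →+ (RootMod G →₀ ℤ) :=
  Finsupp.mapDomain.addMonoidHom (rmodSmul G w)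

/-- The canonical projection `π : ℤΦ → ℤ[Φ/±]`, `T_α ↦ t_{[α]}`. -/
def piHom : (Root G →₀ ℤ) →+ (RootMod G →₀ ℤ) :=
  Finsupp.mapDomain.addMonoidHom (rcls G)

/-- The action of `w ∈ W` on `ℚ ⊗ ℤΦ = (Φ →₀ ℚ)`. -/
def wZPhiQ (w : ↥(Weyl G)) : (Root G →₀ ℚ) →ₗ[ℚ] (Root G →₀ ℚ) :=
  Finsupp.lmapDomain ℚ ℚ (rootSmul G w)

/-- The action of `w ∈ W` on `ℚ ⊗ ℤ[Φ/±] = (Φ/± →₀ ℚ)`. -/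
def wZQQ (w : ↥(Weyl G)) : (RootMod G →₀ ℚ) →ₗ[ℚ] (RootMod G →₀ ℚ) :=
  Finsupp.lmapDomain ℚ ℚ (rmodSmul G w)

/-- The projection `ℚ ⊗ ℤΦ → ℚ ⊗ ℤ[Φ/±]`. -/
def piHomQ : (Root G →₀ ℚ) →ₗ[ℚ] (RootMod G →₀ ℚ) :=
  Finsupp.lmapDomain ℚ ℚ (rcls G)

/-- The subgroup `P̄ ⊂ ℤΦ` generated by the elements `T_α - T_{-α}`. -/
def Pbar : AddSubgroup (Root G →₀ ℤ) :=
  AddSubgroup.closure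
    {x | ∃ α : Root G, x = Finsupp.single α 1 - Finsupp.single (negRoot G α) 1}

end ADE


open ADE

variable {I : Type*} [Fintype I] [DecidableEq I]

/-- if `I` is nonempty there is no `W`-equivariant section of
`π : ℤΦ → ℤ[Φ/±]`; i.e. the short exact sequence `0 → P̄ → ℤΦ → ℤ[Φ/±] → 0` of
`W`-representations is not `W`-equivariantly split. -/
theorem no_equivariant_splitting
    (G : SimpleGraph I) [DecidableRel G.Adj] [Nonempty I] (hneg : NegDef G) :
    ¬ ∃ s : (RootMod G →₀ ℤ) →+ (Root G →₀ ℤ),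
        (∀ (w : ↥(Weyl G)) (x : RootMod G →₀ ℤ), s (wZQ G w x) = wZPhi G w (s x)) ∧
        (∀ x : RootMod G →₀ ℤ, piHom G (s x) = x) := by
  classical
  rintro ⟨s, hequiv, hsect⟩
  obtain ⟨i⟩ := ‹Nonempty I›
  set α : Root G := simpleRoot G i with hα
  set β : Root G := negRoot G α with hβ
  set c : RootMod G := cls G i with hc
  have hαβ : α ≠ β := by
    intro h
    have h' := congrArg (fun r : Root G => r.1 i) h
    simp [hα, hβ, simpleRoot, negRoot] at h'
  have hre : reflect G i (Pi.single i 1) = -(Pi.single i 1) := by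
    rw [reflect, Bform_single_self]
    ext j
    simp only [Pi.add_apply, Pi.smul_apply, Pi.neg_apply, Pi.single_apply, smul_eq_mul]
    split <;> ring
  have hσα : rootSmul G (sGen G i) α = β := by
    apply Subtype.ext
    show reflectEquiv G i (Pi.single i 1) = -(Pi.single i 1)
    rw [reflectEquiv_apply, hre]
  have hσβ : rootSmul G (sGen G i) β = α := by
    apply Subtype.ext
    show reflectEquiv G i (-(Pi.single i 1)) = Pi.single i 1
    rw [reflectEquiv_apply, ← hre, reflect_reflect]
  have hσinj : Function.Injective (rootSmul G (sGen G i)) := by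
    intro a b h
    exact Subtype.ext ((reflectEquiv G i).injective (congrArg Subtype.val h))
  have hwc : rmodSmul G (sGen G i) c = c := by
    show Quotient.map _ _ (Quotient.mk (rootSetoid G) α) = Quotient.mk (rootSetoid G) α
    rw [Quotient.map_mk]
    apply Quotient.sound
    rw [hσα]
    exact Or.inr rfl
  set x : Root G →₀ ℤ := s (Finsupp.single c 1) with hxdef
  have hx : Finsupp.mapDomain (rootSmul G (sGen G i)) x = x := by
    have h1 := hequiv (sGen G i) (Finsupp.single c 1)
    have h2 : wZQ G (sGen G i) (Finsupp.single c 1) = Finsupp.single c 1 := by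
      show Finsupp.mapDomain (rmodSmul G (sGen G i)) (Finsupp.single c 1) = _
      rw [Finsupp.mapDomain_single, hwc]
    rw [h2] at h1
    exact h1.symm
  have hxval : x α = x β := by
    have h3 := Finsupp.mapDomain_apply hσinj x β
    rw [hσβ, hx] at h3
    exact h3
  have hcls : ∀ γ : Root G, rcls G γ = c ↔ (γ = α ∨ γ = β) := by
    intro γ
    constructor
    · intro h
      have h' : (rootSetoid G).r γ α := Quotient.exact h
      rcases h' with h' | h'
      · exact Or.inl (Subtype.ext h')
      · exact Or.inr (Subtype.ext h')
    · rintro (rfl | rfl)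
      · rfl
      · exact Quotient.sound (Or.inr rfl)
  have key : ∀ y : Root G →₀ ℤ, (piHom G y) c = y α + y β := by
    have hL : (Finsupp.applyAddHom c).comp (piHom G) =
        Finsupp.applyAddHom α + Finsupp.applyAddHom β := by
      apply Finsupp.addHom_ext
      intro γ n
      have hpi : piHom G (Finsupp.single γ n) = Finsupp.single (rcls G γ) n := by
        show Finsupp.mapDomain (rcls G) (Finsupp.single γ n) = _
        rw [Finsupp.mapDomain_single]
      simp only [AddMonoidHom.comp_apply, AddMonoidHom.add_apply, Finsupp.applyAddHom_apply, hpi]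
      rw [Finsupp.single_apply, Finsupp.single_apply, Finsupp.single_apply]
      by_cases h : rcls G γ = c
      · rcases (hcls γ).1 h with rfl | rfl
        · simp [h, hαβ, hαβ.symm]
        · simp [h, hαβ, hαβ.symm]
      · have h1 : ¬ γ = α := fun hh => h ((hcls γ).2 (Or.inl hh))
        have h2 : ¬ γ = β := fun hh => h ((hcls γ).2 (Or.inr hh))
        simp [h, h1, h2]
    intro y
    have := congrFun (congrArg (fun f : _ →+ ℤ => (f : (Root G →₀ ℤ) → ℤ)) hL) y
    simpa using this
  have h1 : (piHom G x) c = 1 := by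
    rw [hxdef, hsect, Finsupp.single_eq_same]
  rw [key x, hxval] at h1
  omega
end
end

section
/- Let M be a torsion-free abelian group, B : M × M → ℤ a symmetric biadditive form, and x, y ∈ M with x ≠ y, B(x,x) = B(y,y) = −2 and B(x,y) = −2. Define the sequence (c_k)_{k≥0} in M by c_0 = x, c_{2m+1} = s_y(c_{2m}) and c_{2m+2} = s_x(c_{2m+1}) (that is, the sequence x, s_y x, s_x s_y x, s_y s_x s_y x, …). Then the elements c_k are pairwise distinct; in particular M contains infinitely many elements v with B(v,v) = −2. -/
set_option linter.unusedSectionVars false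

/-- for a symmetric biadditive form `B` on a torsion-free abelian group `M`
and `x ≠ y` with `B(x,x) = B(y,y) = B(x,y) = -2`, the sequence
`x, s_y x, s_x s_y x, s_y s_x s_y x, …` of Picard–Lefschetz reflections
(`s_v(w) = w + B(w,v)·v`) consists of pairwise distinct elements; in particular `M`
contains infinitely many elements `v` with `B(v,v) = -2`. -/
theorem reflections_orbit_infinite
    {M : Type*} [AddCommGroup M] [NoZeroSMulDivisors ℤ M]
    (B : M → M → ℤ)
    (hsymm : ∀ v w : M, B v w = B w v)
    (haddl : ∀ u v w : M, B (u + v) w = B u w + B v w)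
    (haddr : ∀ u v w : M, B u (v + w) = B u v + B u w)
    (x y : M) (hxy : x ≠ y)
    (hxx : B x x = -2) (hyy : B y y = -2) (hxy2 : B x y = -2)
    (c : ℕ → M) (hc0 : c 0 = x)
    (hodd : ∀ m : ℕ, c (2 * m + 1) = c (2 * m) + B (c (2 * m)) y • y)
    (heven : ∀ m : ℕ, c (2 * m + 2) = c (2 * m + 1) + B (c (2 * m + 1)) x • x) :
    Function.Injective c ∧ {v : M | B v v = -2}.Infinite := by
  have hsmull : ∀ (n : ℤ) (v w : M), B (n • v) w = n * B v w := by
    intro n v w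
    have := map_zsmul (AddMonoidHom.mk' (fun v => B v w) (fun a b => haddl a b w)) n v
    simpa [smul_eq_mul] using this
  have hyx : B y x = -2 := by rw [hsymm]; exact hxy2
  have hBval : ∀ (p q : ℤ) (w : M), B (p • x + q • y) w = p * B x w + q * B y w := by
    intro p q w
    rw [haddl, hsmull, hsmull]
  -- explicit formula
  have hform : ∀ m : ℕ,
      c (2 * m) = (2 * (m : ℤ) + 1) • x + (-(2 * (m : ℤ))) • y ∧
      c (2 * m + 1) = (2 * (m : ℤ) + 1) • x + (-(2 * (m : ℤ) + 2)) • y := by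
    intro m
    induction m with
    | zero =>
      refine ⟨by simp [hc0], ?_⟩
      have h := hodd 0
      rw [hc0, hxy2] at h
      rw [show 2 * 0 + 1 = 1 from rfl] at h ⊢
      rw [h]
      push_cast
      module
    | succ n ih =>
      obtain ⟨_, ih1⟩ := ih
      have hB2 : B (c (2 * n + 1)) x = 2 := by
        rw [ih1, hBval, hxx, hyx]; ring
      have h2 : c (2 * (n + 1)) = (2 * ((n : ℤ) + 1) + 1) • x + (-(2 * ((n : ℤ) + 1))) • y := by
        have h := heven n
        rw [hB2, ih1] at h
        rw [show 2 * (n + 1) = 2 * n + 2 from by ring, h]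
        push_cast
        module
      refine ⟨by push_cast at h2 ⊢; exact h2, ?_⟩
      have hB3 : B (c (2 * (n + 1))) y = -2 := by
        rw [h2, hBval, hxy2, hyy]; ring
      have h := hodd (n + 1)
      rw [hB3, h2] at h
      rw [h]
      push_cast
      module
  -- every c k has a unique pair of coefficients of the form p•x+q•y with p-q = 2k+1
  have hcoef : ∀ k : ℕ, ∃ p q : ℤ, c k = p • x + q • y ∧ p - q = 2 * k + 1 ∧ (p + q) ^ 2 = 1 := by
    intro k
    rcases Nat.even_or_odd k with ⟨m, hm⟩ | ⟨m, hm⟩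
    · refine ⟨2 * m + 1, -(2 * m), ?_, ?_, by ring⟩
      · rw [hm, show m + m = 2 * m from by ring]; exact (hform m).1
      · have : (k : ℤ) = 2 * m := by exact_mod_cast hm.trans (two_mul m).symm
        rw [this]; ring
    · refine ⟨2 * m + 1, -(2 * m + 2), ?_, ?_, by ring⟩
      · rw [hm]; exact (hform m).2
      · have : (k : ℤ) = 2 * m + 1 := by exact_mod_cast hm
        rw [this]; ring
  -- independence: p•x + q•y = 0 → p = 0 ∧ q = 0
  have hindep : ∀ p q : ℤ, p • x + q • y = 0 → p = 0 ∧ q = 0 := by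
    intro p q h
    have h0B : B 0 x = 0 := by simpa using hsmull 0 x x
    have hx0 : p * B x x + q * B y x = 0 := by
      rw [← hBval, h, h0B]
    rw [hxx, hyx] at hx0
    have hq : q = -p := by linarith
    rw [hq] at h
    have : p • (x - y) = 0 := by
      rw [smul_sub]
      rw [neg_smul] at h
      linear_combination (norm := abel) h
    rcases smul_eq_zero.mp this with hp | hxy'
    · exact ⟨hp, by rw [hq, hp, neg_zero]⟩
    · exact absurd (sub_eq_zero.mp hxy') hxy
  have hinj : Function.Injective c := by
    intro i j hij
    obtain ⟨p, q, hci, hpq, -⟩ := hcoef i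
    obtain ⟨p', q', hcj, hpq', -⟩ := hcoef j
    have h0 : (p - p') • x + (q - q') • y = 0 := by
      have : p • x + q • y = p' • x + q' • y := by rw [← hci, ← hcj, hij]
      rw [sub_smul, sub_smul]
      linear_combination (norm := abel) this
    obtain ⟨h1, h2⟩ := hindep _ _ h0
    have : (2 * (i : ℤ) + 1) = 2 * (j : ℤ) + 1 := by
      rw [← hpq, ← hpq']; omega
    exact_mod_cast by omega
  refine ⟨hinj, ?_⟩
  apply Set.infinite_of_injective_forall_mem hinj
  intro k
  obtain ⟨p, q, hck, hpq, hpq2⟩ := hcoef k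
  show B (c k) (c k) = -2
  rw [hck, hBval, hsymm x (p • x + q • y), hsymm y (p • x + q • y), hBval, hBval,
    hxx, hxy2, hyx, hyy]
  linear_combination (-2 : ℤ) * hpq2
end
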